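/- The limit functor from the category of pro-objects in finite sets to the category of compact, totally disconnected (profinite) topological spaces, sending a pro-object to the limit of its corresponding diagram, is an equivalence of categories. -/

import Mathlib

/-!
STATEMENT 0: The limit functor from the category `pro-𝓕` of pro-objects in finite sets to
the category `Ê` of compact, totally disconnected (profinite) topological spaces, sending a
pro-object to the limit in `Ê` of the corresponding diagram, is an equivalence of categories.

We realize the pro-category of finite sets in its standard functorial incarnation:
`Pro(𝓕) = (Lex(𝓕, Set))ᵒᵖ`, the opposite of the category of finite-limit-preserving
functors `𝓕 → Set`; these correspond exactly to cofiltered diagrams of finite sets with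
hom-sets `Hom(X, Y) = lim_t colim_s Hom(X_s, Y_t)`.  A finite set `S` yields the
pro-object `Hom(S, −)`.  The statement asserts that there is an equivalence
`Pro(𝓕) ≌ Profinite` which on the pro-objects associated to finite sets is the canonical
inclusion of finite sets into profinite spaces — i.e. the equivalence induced by sending
a pro-object of finite sets to the limit of its diagram.
-/

open CategoryTheory CategoryTheory.Limits

/-- The pro-category of finite sets, realized as the opposite of the category of
finite-limit-preserving functors `FintypeCat ⥤ Type`. -/
abbrev ProFintypeCat : Type 1 :=
  (ObjectProperty.FullSubcategory (fun F : FintypeCat.{0} ⥤ Type => Nonempty (PreservesFiniteLimits F)))ᵒᵖ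

/-- The canonical embedding of finite sets into their pro-category, sending `S` to the
pro-object `Hom(S, −)`. -/
def finToPro : FintypeCat.{0} ⥤ ProFintypeCat where
  obj S := Opposite.op ⟨coyoneda.obj (Opposite.op S), ⟨inferInstance⟩⟩
  map {S T} f :=
    (show (⟨coyoneda.obj (Opposite.op T), ⟨inferInstance⟩⟩ :
        ObjectProperty.FullSubcategory (fun F : FintypeCat.{0} ⥤ Type => Nonempty (PreservesFiniteLimits F))) ⟶
        ⟨coyoneda.obj (Opposite.op S), ⟨inferInstance⟩⟩ from ObjectProperty.homMk (coyoneda.map f.op)).op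

attribute [local instance] CategoryTheory.ConcreteCategory.instFunLike

noncomputable section

-- forget Profinite reflects isos?
example : (forget Profinite.{0}).ReflectsIsomorphisms := inferInstance

instance : ReflectsLimits (forget Profinite.{0}) :=
  reflectsLimits_of_reflectsIsomorphisms

-- toProfinite ⋙ forget ≅ incl-forget?
example : FintypeCat.toProfinite.{0} ⋙ forget Profinite ≅ forget FintypeCat :=
  NatIso.ofComponents (fun S => Iso.refl _) (by intros; rfl)

instance : PreservesFiniteLimits (FintypeCat.toProfinite.{0}) := by
  constructor
  intro J _ _
  have h : PreservesLimitsOfShape J (FintypeCat.toProfinite.{0} ⋙ forget Profinite) := by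
    have : PreservesFiniteLimits (forget FintypeCat.{0}) := inferInstance
    exact preservesLimitsOfShape_of_natIso
      (NatIso.ofComponents (fun S => Iso.refl _) (by intros; rfl) :
        forget FintypeCat ≅ FintypeCat.toProfinite.{0} ⋙ forget Profinite)
  exact preservesLimitsOfShape_of_reflects_of_preserves FintypeCat.toProfinite (forget Profinite)

/-- The functor sending a profinite space `X` to the lex functor `S ↦ C(X, S)`. -/
def profToPro : Profinite.{0} ⥤ ProFintypeCat where
  obj X := Opposite.op ⟨FintypeCat.toProfinite ⋙ coyoneda.obj (Opposite.op X),
    ⟨comp_preservesFiniteLimits _ _⟩⟩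
  map {X Y} f := (show (⟨FintypeCat.toProfinite ⋙ coyoneda.obj (Opposite.op Y), _⟩ :
      ObjectProperty.FullSubcategory (fun F : FintypeCat.{0} ⥤ Type => Nonempty (PreservesFiniteLimits F))) ⟶
      ⟨FintypeCat.toProfinite ⋙ coyoneda.obj (Opposite.op X), _⟩ from
      ObjectProperty.homMk <| Functor.whiskerLeft FintypeCat.toProfinite (coyoneda.map f.op)).op
  map_id X := by
    apply Quiver.Hom.unop_inj
    apply ObjectProperty.hom_ext
    apply NatTrans.ext
    funext S
    ext (g : _ ⟶ _)
    simp
  map_comp f g := by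
    apply Quiver.Hom.unop_inj
    apply ObjectProperty.hom_ext
    apply NatTrans.ext
    funext S
    ext (h : _ ⟶ _)
    simp

instance : profToPro.Faithful where
  map_injective {X Y} f g h := by
    apply Y.asLimit.hom_ext
    intro Q
    have h' := congrArg (fun x : profToPro.obj X ⟶ profToPro.obj Y => x.unop.hom) h
    exact congrArg (fun (γ : (FintypeCat.toProfinite ⋙ coyoneda.obj (Opposite.op Y)) ⟶
        (FintypeCat.toProfinite ⋙ coyoneda.obj (Opposite.op X))) =>
      γ.app (Y.fintypeDiagram.obj Q) (Y.asLimitCone.π.app Q)) h'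

instance : profToPro.Full where
  map_surjective {X Y} α := by
    let β : (FintypeCat.toProfinite ⋙ coyoneda.obj (Opposite.op Y)) ⟶
        (FintypeCat.toProfinite ⋙ coyoneda.obj (Opposite.op X)) := α.unop.hom
    -- build a cone on Y.diagram with point X
    let c : Cone Y.diagram :=
      { pt := X
        π :=
          { app := fun Q => β.app (Y.fintypeDiagram.obj Q) (Y.asLimitCone.π.app Q)
            naturality := fun Q Q' φ => by
              have hnat := ConcreteCategory.congr_hom (β.naturality (Y.fintypeDiagram.map φ))
                (Y.asLimitCone.π.app Q)
              have hco : Y.asLimitCone.π.app Q ≫ Y.diagram.map φ = Y.asLimitCone.π.app Q' :=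
                Y.asLimitCone.w φ
              dsimp at hnat ⊢
              rw [Category.id_comp, ← hco]
              exact hnat } }
    refine ⟨Y.asLimit.lift c, ?_⟩
    apply Quiver.Hom.unop_inj
    apply ObjectProperty.hom_ext
    apply NatTrans.ext
    funext S
    ext (k : Y ⟶ FintypeCat.toProfinite.obj S)
    -- factor k through a discrete quotient
    haveI : DiscreteTopology (FintypeCat.toProfinite.obj S) := ⟨rfl⟩
    obtain ⟨Q, g₀, hg⟩ := Profinite.exists_locallyConstant Y.asLimitCone Y.asLimit
      (⟨fun y => k y, (IsLocallyConstant.iff_continuous _).mpr k.hom.hom.continuous⟩ :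
        LocallyConstant Y (FintypeCat.toProfinite.obj S))
    let h : Y.fintypeDiagram.obj Q ⟶ S := FintypeCat.homMk g₀.toFun
    have hk : k = Y.asLimitCone.π.app Q ≫ FintypeCat.toProfinite.map h := by
      ext y
      exact congrArg (fun (l : LocallyConstant Y (FintypeCat.toProfinite.obj S)) => l y) hg
    have hnat := ConcreteCategory.congr_hom (β.naturality h) (Y.asLimitCone.π.app Q)
    dsimp at hnat
    show Y.asLimit.lift c ≫ k = β.app S k
    rw [hk]
    rw [show Y.asLimitCone.π.app Q ≫ FintypeCat.toProfinite.map h =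
      (FintypeCat.toProfinite ⋙ coyoneda.obj (Opposite.op Y)).map h (Y.asLimitCone.π.app Q) from rfl]
    rw [show β.app S ((FintypeCat.toProfinite ⋙ coyoneda.obj (Opposite.op Y)).map h
      (Y.asLimitCone.π.app Q)) = β.app (Y.fintypeDiagram.obj Q) (Y.asLimitCone.π.app Q) ≫
      FintypeCat.toProfinite.map h from hnat]
    rw [show (FintypeCat.toProfinite ⋙ coyoneda.obj (Opposite.op Y)).map h
      (Y.asLimitCone.π.app Q) = Y.asLimitCone.π.app Q ≫ FintypeCat.toProfinite.map h from rfl,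
      ← Category.assoc, Y.asLimit.fac c Q]

section SectionsLemmas

open CategoryTheory.Functor

variable {J : Type} [SmallCategory J] [IsCofiltered J] (F : J ⥤ Type) [∀ j, Finite (F.obj j)]

lemma aux_ml : F.IsMittagLeffler :=
  F.isMittagLeffler_of_exists_finite_range (fun j => ⟨j, 𝟙 j, Set.finite_range _⟩)

lemma sections_lift (j₀ : J) (y : F.obj j₀) (hy : y ∈ F.eventualRange j₀) :
    ∃ s : F.sections, s.1 j₀ = y := by
  have hml := aux_ml F
  have hne : ∀ j, Nonempty (F.toEventualRanges.obj j) := by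
    intro j
    obtain ⟨k, φ, ψ, -⟩ := CategoryTheory.IsCofilteredOrEmpty.cone_objs j j₀
    have h1 : F.eventualRange j₀ = F.map ψ '' F.eventualRange k :=
      hml.eq_image_eventualRange F ψ
    have h2 : (F.eventualRange k).Nonempty := by
      rcases (h1 ▸ hy : y ∈ F.map ψ '' F.eventualRange k) with ⟨z, hz, -⟩
      exact ⟨z, hz⟩
    obtain ⟨z, hz⟩ := h2
    exact ⟨⟨F.map φ z, F.eventualRange_mapsTo φ hz⟩⟩
  have hsur := F.surjective_toEventualRanges hml
  obtain ⟨s, hs⟩ := F.toEventualRanges.eval_section_surjective_of_surjective hsur j₀ ⟨y, hy⟩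
  refine ⟨F.toEventualRangesSectionsEquiv s, ?_⟩
  have : (F.toEventualRangesSectionsEquiv s).1 j₀ = (s.1 j₀).1 := rfl
  rw [this]
  exact congrArg Subtype.val hs

lemma range_subset_of_sections {j₀ : J} (E : Set (F.obj j₀))
    (hE : ∀ s : F.sections, s.1 j₀ ∈ E) :
    ∃ (j₁ : J) (ψ : j₁ ⟶ j₀), Set.range (F.map ψ) ⊆ E := by
  obtain ⟨j₁, ψ, hψ⟩ := F.isMittagLeffler_iff_eventualRange.1 (aux_ml F) j₀
  refine ⟨j₁, ψ, fun z hz => ?_⟩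
  obtain ⟨s, hs⟩ := sections_lift F j₀ z (hψ ▸ hz)
  exact hs ▸ hE s

end SectionsLemmas

section EssSurj

open FintypeCat

instance : HasFiniteLimits FintypeCat.Skeleton.{0} :=
  ⟨fun J _ _ => Adjunction.hasLimitsOfShape_of_equivalence FintypeCat.Skeleton.incl⟩

variable (A : FintypeCat.{0} ⥤ Type) [PreservesFiniteLimits A]

abbrev A0 : FintypeCat.Skeleton.{0} ⥤ Type := FintypeCat.Skeleton.incl ⋙ A

instance : PreservesFiniteLimits (A0 A) := comp_preservesFiniteLimits _ _
instance : RepresentablyFlat (A0 A) := flat_of_preservesFiniteLimits _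
instance : IsCofiltered (A0 A).Elements :=
  IsCofiltered.of_equivalence (CategoryOfElements.structuredArrowEquivalence (A0 A)).symm

abbrev DA : (A0 A).Elements ⥤ Profinite.{0} :=
  CategoryOfElements.π (A0 A) ⋙ FintypeCat.Skeleton.incl ⋙ FintypeCat.toProfinite

abbrev XA : Profinite.{0} := limit (DA A)

abbrev FuA : (A0 A).Elements ⥤ Type := DA A ⋙ forget Profinite

instance : ∀ j, Finite ((FuA A).obj j) := fun j => by
  show Finite (FintypeCat.toProfinite.obj (FintypeCat.Skeleton.incl.obj j.1))
  infer_instance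

noncomputable def secEquiv : (forget Profinite).obj (XA A) ≃ (FuA A).sections :=
  Types.isLimitEquivSections (isLimitOfPreserves (forget Profinite) (limit.isLimit (DA A)))

lemma secEquiv_symm_apply (s : (FuA A).sections) (j : (A0 A).Elements) :
    (forget Profinite).map (limit.π (DA A) j) ((secEquiv A).symm s) = s.1 j :=
  Types.isLimitEquivSections_symm_apply
    (isLimitOfPreserves (forget Profinite) (limit.isLimit (DA A))) s j

/-- The components of the comparison map. -/
noncomputable def etaApp (c : FintypeCat.Skeleton.{0}) (x : (A0 A).obj c) :
    XA A ⟶ FintypeCat.toProfinite.obj (FintypeCat.Skeleton.incl.obj c) :=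
  limit.π (DA A) ⟨c, x⟩

lemma etaApp_injective (c : FintypeCat.Skeleton.{0}) :
    Function.Injective (etaApp A c) := by
  intro x x' h
  obtain ⟨j'', u, v, -⟩ :=
    CategoryTheory.IsCofilteredOrEmpty.cone_objs ((A0 A).elementsMk c x) ((A0 A).elementsMk c x')
  set E : Set ((FuA A).obj j'') :=
    {t | (forget Profinite).map ((DA A).map u) t = (forget Profinite).map ((DA A).map v) t}
    with hEdef
  have hE : ∀ s : (FuA A).sections, s.1 j'' ∈ E := by
    intro s
    have h1 := secEquiv_symm_apply A s j''
    set p := (secEquiv A).symm s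
    have w1 : limit.π (DA A) j'' ≫ (DA A).map u = limit.π (DA A) ⟨c, x⟩ := limit.w (DA A) u
    have w2 : limit.π (DA A) j'' ≫ (DA A).map v = limit.π (DA A) ⟨c, x'⟩ := limit.w (DA A) v
    show (forget Profinite).map ((DA A).map u) (s.1 j'') =
      (forget Profinite).map ((DA A).map v) (s.1 j'')
    rw [← h1, ← FunctorToTypes.map_comp_apply, ← FunctorToTypes.map_comp_apply, w1, w2]
    exact congrArg (fun k => (forget Profinite).map k p) h
  obtain ⟨j₁, ψ, hr⟩ := range_subset_of_sections (FuA A) E hE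
  -- deduce ψ.1 ≫ u.1 = ψ.1 ≫ v.1 in the skeleton
  have hfun : (forget Profinite).map ((DA A).map (ψ ≫ u)) =
      (forget Profinite).map ((DA A).map (ψ ≫ v)) := by
    ext t
    have ht : (FuA A).map ψ t ∈ E := hr ⟨t, rfl⟩
    have := ht
    rw [hEdef] at this
    simp only [Functor.map_comp]
    exact this
  have hmor : (ψ ≫ u).1 = (ψ ≫ v).1 := by
    apply FintypeCat.Skeleton.incl.map_injective
    apply FintypeCat.toProfinite.map_injective
    apply (forget Profinite).map_injective
    exact hfun
  have hx : (A0 A).map (ψ ≫ u).1 j₁.2 = x := by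
    rw [show (ψ ≫ u).1 = ψ.1 ≫ u.1 from rfl, FunctorToTypes.map_comp_apply, ψ.2, u.2]
  have hx' : (A0 A).map (ψ ≫ v).1 j₁.2 = x' := by
    rw [show (ψ ≫ v).1 = ψ.1 ≫ v.1 from rfl, FunctorToTypes.map_comp_apply, ψ.2, v.2]
  rw [← hx, ← hx', hmor]

lemma etaApp_surjective (c : FintypeCat.Skeleton.{0}) :
    Function.Surjective (etaApp A c) := by
  intro k
  haveI : DiscreteTopology (FintypeCat.toProfinite.obj (FintypeCat.Skeleton.incl.obj c)) := ⟨rfl⟩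
  obtain ⟨j, g₀, hg⟩ := Profinite.exists_locallyConstant (limit.cone (DA A))
    (limit.isLimit (DA A))
    (⟨fun y => k y, (IsLocallyConstant.iff_continuous _).mpr k.hom.hom.continuous⟩ :
      LocallyConstant (XA A) (FintypeCat.toProfinite.obj (FintypeCat.Skeleton.incl.obj c)))
  -- g₀ is a locally constant map on the finite set `(DA A).obj j`
  let g₁ : (DA A).obj j ⟶ FintypeCat.toProfinite.obj (FintypeCat.Skeleton.incl.obj c) :=
    ConcreteCategory.ofHom (C := Profinite) ⟨g₀.toFun, g₀.continuous⟩
  let m : FintypeCat.Skeleton.incl.obj j.1 ⟶ FintypeCat.Skeleton.incl.obj c :=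
    FintypeCat.toProfinite.preimage g₁
  let f : j.1 ⟶ c := FintypeCat.Skeleton.incl.preimage m
  refine ⟨(A0 A).map f j.2, ?_⟩
  have w : limit.π (DA A) j ≫ (DA A).map (⟨f, rfl⟩ : j ⟶ (A0 A).elementsMk c ((A0 A).map f j.2)) =
      limit.π (DA A) ((A0 A).elementsMk c ((A0 A).map f j.2)) :=
    limit.w (DA A) _
  have hDf : (DA A).map (⟨f, rfl⟩ : j ⟶ (A0 A).elementsMk c ((A0 A).map f j.2)) = g₁ := by
    show FintypeCat.toProfinite.map (FintypeCat.Skeleton.incl.map f) = g₁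
    rw [show FintypeCat.Skeleton.incl.map f = m from FintypeCat.Skeleton.incl.map_preimage m]
    exact FintypeCat.toProfinite.map_preimage g₁
  show limit.π (DA A) ((A0 A).elementsMk c ((A0 A).map f j.2)) = k
  rw [← w, hDf]
  ext y
  exact (congrArg (fun (l : LocallyConstant (XA A)
    (FintypeCat.toProfinite.obj (FintypeCat.Skeleton.incl.obj c))) => l y) hg).symm

/-- The comparison iso on the skeleton. -/
noncomputable def eta : A0 A ≅ FintypeCat.Skeleton.incl ⋙
    (FintypeCat.toProfinite ⋙ coyoneda.obj (Opposite.op (XA A))) :=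
  NatIso.ofComponents
    (fun c => Equiv.toIso (Equiv.ofBijective (etaApp A c)
      ⟨etaApp_injective A c, etaApp_surjective A c⟩))
    (by
      intro c c' f
      ext x
      show etaApp A c' ((A0 A).map f x) = etaApp A c x ≫
        FintypeCat.toProfinite.map (FintypeCat.Skeleton.incl.map f)
      exact (limit.w (DA A) (⟨f, rfl⟩ : (A0 A).elementsMk c x ⟶
        (A0 A).elementsMk c' ((A0 A).map f x))).symm)

/-- The comparison iso on all of `FintypeCat`. -/
noncomputable def etaFull : A ≅ FintypeCat.toProfinite ⋙ coyoneda.obj (Opposite.op (XA A)) :=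
  ((Functor.whiskeringLeft FintypeCat.Skeleton.{0} FintypeCat.{0} Type).obj
    FintypeCat.Skeleton.incl).preimageIso (eta A)

end EssSurj

instance : profToPro.EssSurj where
  mem_essImage P := by
    haveI : PreservesFiniteLimits P.unop.obj := P.unop.property.some
    refine ⟨XA P.unop.obj, ⟨?_⟩⟩
    have i : (ObjectProperty.ι
        (fun F : FintypeCat.{0} ⥤ Type => Nonempty (PreservesFiniteLimits F))).obj
          ((profToPro.obj (XA P.unop.obj)).unop) ≅ (ObjectProperty.ι _).obj P.unop :=
      (etaFull P.unop.obj).symm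
    exact ((ObjectProperty.ι _).preimageIso i).symm.op

noncomputable instance : profToPro.IsEquivalence := {}

/-- Build an isomorphism in a full subcategory from an isomorphism of underlying objects. -/
def subIso {P : (FintypeCat.{0} ⥤ Type) → Prop} (F G : ObjectProperty.FullSubcategory P)
    (i : F.obj ≅ G.obj) : F ≅ G where
  hom := ObjectProperty.homMk (i.hom : F.obj ⟶ G.obj)
  inv := ObjectProperty.homMk (i.inv : G.obj ⟶ F.obj)
  hom_inv_id := ObjectProperty.hom_ext _ i.hom_inv_id
  inv_hom_id := ObjectProperty.hom_ext _ i.inv_hom_id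

/-- comparison of the two embeddings -/
noncomputable def cmpIso : FintypeCat.toProfinite.{0} ⋙ profToPro ≅ finToPro :=
  NatIso.ofComponents
    (fun S => (subIso _ _
      (NatIso.ofComponents
        (fun T => Equiv.toIso (FintypeCat.toProfiniteFullyFaithful.homEquiv (X := S) (Y := T)))
        (by
          intro T T' g
          ext (k : S ⟶ T)
          show FintypeCat.toProfinite.map (k ≫ g) =
            FintypeCat.toProfinite.map k ≫ FintypeCat.toProfinite.map g
          simp))).op)
    (by
      intro S S' f
      apply Quiver.Hom.unop_inj
      apply ObjectProperty.hom_ext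
      apply NatTrans.ext
      funext T
      ext (k : S' ⟶ T)
      show FintypeCat.toProfinite.map (f ≫ k) =
        FintypeCat.toProfinite.map f ≫ FintypeCat.toProfinite.map k
      simp)

theorem proFintype_equiv_profinite :
    ∃ e : ProFintypeCat ≌ Profinite.{0},
      Nonempty (finToPro ⋙ e.functor ≅ FintypeCat.toProfinite) := by
  refine ⟨profToPro.asEquivalence.symm, ⟨?_⟩⟩
  calc finToPro ⋙ profToPro.asEquivalence.symm.functor
      ≅ (FintypeCat.toProfinite ⋙ profToPro) ⋙ profToPro.asEquivalence.inverse :=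
        Functor.isoWhiskerRight cmpIso.symm _
    _ ≅ FintypeCat.toProfinite ⋙ (profToPro ⋙ profToPro.asEquivalence.inverse) :=
        Functor.associator _ _ _
    _ ≅ FintypeCat.toProfinite ⋙ 𝟭 _ :=
        Functor.isoWhiskerLeft _ profToPro.asEquivalence.unitIso.symm
    _ ≅ FintypeCat.toProfinite := Functor.rightUnitor _
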